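/- (Grouped force on the first bead of a particle in bosonic PIMD with PBC.) With Z(r) = (1/N!)·∑_{σ} ∑_{w} exp(−βE^{σ,w}(r)) and V = −(1/β)·log Z, and with Pr denoting probabilities of events under the Boltzmann distribution Pr(σ,w) = exp(−βE^{σ,w})/(N!·Z), for every particle ℓ and coordinate i: −∂V/∂(r_ℓ^1)_i = ∑_{ℓ'=1}^{N} ∑_{w∈Λ} Pr(σ(ℓ') = ℓ and w_{ℓ'}^P = w) · (−2c)·(r_ℓ^1 − r_{ℓ'}^P − w·L)_i + ∑_{w∈Λ} Pr(w_ℓ^1 = w) · (−2c)·(r_ℓ^1 + w·L − r_ℓ^2)_i (requiring P ≥ 2 for the second term). -/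

import Mathlib

open Finset Real

noncomputable section

/-- Winding window: integer vectors `w : Fin d → ℤ` with `-W ≤ w i ≤ W` in every coordinate. -/
def windowSet (d W : ℕ) : Finset (Fin d → ℤ) :=
  Fintype.piFinset fun _ => Finset.Icc (-(W : ℤ)) (W : ℤ)

/-- The set of all winding assignments `w : Fin N → Fin P → Λ`. -/
def WAll (N P d W : ℕ) : Finset (Fin N → Fin P → Fin d → ℤ) :=
  Fintype.piFinset fun _ => Fintype.piFinset fun _ => windowSet d W

/-- The last bead (bead `P`, zero-indexed `P-1`). -/
def lastIdx (P : ℕ) [NeZero P] : Fin P :=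
  ⟨P - 1, Nat.sub_lt (Nat.pos_of_ne_zero (NeZero.ne P)) Nat.one_pos⟩

/-- Bead `P-1` (zero-indexed `P-2`; meaningful for `P ≥ 2`). -/
def prevIdx (P : ℕ) [NeZero P] : Fin P :=
  ⟨P - 2, Nat.sub_lt (Nat.pos_of_ne_zero (NeZero.ne P)) Nat.two_pos⟩

/-- Configuration spring energy `E^{σ,w}`: the bead after the last bead of particle `ℓ`
is the first bead of particle `σ(ℓ)`. -/
def Eperm (N P d : ℕ) [NeZero P] (c L : ℝ) (r : Fin N → Fin P → Fin d → ℝ)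
    (σ : Equiv.Perm (Fin N)) (w : Fin N → Fin P → Fin d → ℤ) : ℝ :=
  c * ∑ ℓ : Fin N, ∑ j : Fin P, ∑ i : Fin d,
    (r ℓ j i + (w ℓ j i : ℝ) * L -
      (if h : j.val + 1 < P then r ℓ ⟨j.val + 1, h⟩ i else r (σ ℓ) 0 i)) ^ 2

/-- Bosonic configuration sum `Z(r) = (1/N!) ∑_σ ∑_w exp(-βE^{σ,w}(r))`. -/
def Zb (N P d W : ℕ) [NeZero P] (β c L : ℝ) (r : Fin N → Fin P → Fin d → ℝ) : ℝ :=
  (1 / (Nat.factorial N : ℝ)) *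
    ∑ σ : Equiv.Perm (Fin N), ∑ w ∈ WAll N P d W, Real.exp (-(β * Eperm N P d c L r σ w))

/-- Bosonic ring-polymer potential with PBC: `V(r) = -(1/β) log Z(r)`. -/
def Vb (N P d W : ℕ) [NeZero P] (β c L : ℝ) (r : Fin N → Fin P → Fin d → ℝ) : ℝ :=
  -(1 / β) * Real.log (Zb N P d W β c L r)

/-- Replace the `i`-th coordinate of bead `j` of particle `ℓ` by `t`. -/
def updR {N P d : ℕ} (r : Fin N → Fin P → Fin d → ℝ) (ℓ : Fin N) (j : Fin P) (i : Fin d)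
    (t : ℝ) : Fin N → Fin P → Fin d → ℝ :=
  Function.update r ℓ (Function.update (r ℓ) j (Function.update (r ℓ j) i t))



variable {N P d : ℕ} [NeZero P]

lemma updR_apply (r : Fin N → Fin P → Fin d → ℝ) (ℓ : Fin N) (j : Fin P) (i : Fin d)
    (t : ℝ) (ℓ' : Fin N) (j' : Fin P) (i' : Fin d) :
    updR r ℓ j i t ℓ' j' i' = if ℓ' = ℓ ∧ j' = j ∧ i' = i then t else r ℓ' j' i' := by
  unfold updR
  rcases eq_or_ne ℓ' ℓ with h1 | h1 <;> rcases eq_or_ne j' j with h2 | h2 <;>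
    rcases eq_or_ne i' i with h3 | h3 <;>
    simp [h1, h2, h3, Function.update_of_ne, Function.update_self]

lemma hasDerivAt_coord (r : Fin N → Fin P → Fin d → ℝ) (ℓ : Fin N) (j : Fin P) (i : Fin d)
    (t₀ : ℝ) (ℓ' : Fin N) (j' : Fin P) (i' : Fin d) :
    HasDerivAt (fun t => updR r ℓ j i t ℓ' j' i')
      (if ℓ' = ℓ ∧ j' = j ∧ i' = i then 1 else 0) t₀ := by
  simp only [updR_apply]
  by_cases h : ℓ' = ℓ ∧ j' = j ∧ i' = i
  · simpa [h] using (hasDerivAt_id' t₀)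
  · simpa [h] using (hasDerivAt_const t₀ (r ℓ' j' i'))

set_option linter.unusedSectionVars false

lemma updR_self (r : Fin N → Fin P → Fin d → ℝ) (ℓ : Fin N) (j : Fin P) (i : Fin d) :
    updR r ℓ j i (r ℓ j i) = r := by
  funext ℓ' j' i'
  rw [updR_apply]
  split_ifs with h <;> simp_all

lemma last_iff (hP : 2 ≤ P) (j : Fin P) : (¬((j : ℕ) + 1 < P)) ↔ j = lastIdx P := by
  have := j.2
  rw [Fin.ext_iff]
  unfold lastIdx
  simp only
  omega

lemma one_eq (hP : 2 ≤ P) (h : (0:ℕ) + 1 < P) : (⟨0 + 1, h⟩ : Fin P) = 1 := by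
  have h1 : ((1 : Fin P) : ℕ) = 1 % P := rfl
  have h2 : 1 % P = 1 := Nat.mod_eq_of_lt (by omega)
  simp only [Fin.ext_iff, h1, h2]

lemma hasDerivAt_Eperm (hP : 2 ≤ P) (c L : ℝ) (r : Fin N → Fin P → Fin d → ℝ)
    (ℓ : Fin N) (i : Fin d) (σ : Equiv.Perm (Fin N)) (w : Fin N → Fin P → Fin d → ℤ) :
    HasDerivAt (fun t => Eperm N P d c L (updR r ℓ 0 i t) σ w)
      (2 * c * (r ℓ 0 i + (w ℓ 0 i : ℝ) * L - r ℓ 1 i)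
        - 2 * c * (r (σ.symm ℓ) (lastIdx P) i + (w (σ.symm ℓ) (lastIdx P) i : ℝ) * L
            - r ℓ 0 i)) (r ℓ 0 i) := by
  set t₀ := r ℓ 0 i with ht₀
  have key : ∀ (ℓ' : Fin N) (j : Fin P) (i' : Fin d),
      HasDerivAt (fun t =>
        (updR r ℓ 0 i t ℓ' j i' + (w ℓ' j i' : ℝ) * L -
          (if h : (j : ℕ) + 1 < P then updR r ℓ 0 i t ℓ' ⟨(j : ℕ) + 1, h⟩ i'
            else updR r ℓ 0 i t (σ ℓ') 0 i')) ^ 2)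
        (2 * ((r ℓ' j i' + (w ℓ' j i' : ℝ) * L -
          (if h : (j : ℕ) + 1 < P then r ℓ' ⟨(j : ℕ) + 1, h⟩ i' else r (σ ℓ') 0 i')))
          * ((if ℓ' = ℓ ∧ j = 0 ∧ i' = i then 1 else 0)
            - (if ℓ' = σ.symm ℓ ∧ j = lastIdx P ∧ i' = i then 1 else 0))) t₀ := by
    intro ℓ' j i'
    have ha : HasDerivAt (fun t => updR r ℓ 0 i t ℓ' j i' + (w ℓ' j i' : ℝ) * L)
        (if ℓ' = ℓ ∧ j = 0 ∧ i' = i then 1 else 0) t₀ :=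
      (hasDerivAt_coord r ℓ 0 i t₀ ℓ' j i').add_const _
    have hb : HasDerivAt (fun t =>
        (if h : (j : ℕ) + 1 < P then updR r ℓ 0 i t ℓ' ⟨(j : ℕ) + 1, h⟩ i'
          else updR r ℓ 0 i t (σ ℓ') 0 i'))
        (if ℓ' = σ.symm ℓ ∧ j = lastIdx P ∧ i' = i then 1 else 0) t₀ := by
      by_cases h : (j : ℕ) + 1 < P
      · simp only [dif_pos h]
        have hj : j ≠ lastIdx P := by
          intro hj; rw [← last_iff hP] at hj; exact hj h
        have h0 : (⟨(j : ℕ) + 1, h⟩ : Fin P) ≠ 0 := by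
          intro h0'; have h0'' := congrArg Fin.val h0'; simp only [Fin.val_zero] at h0''; omega
        convert hasDerivAt_coord r ℓ 0 i t₀ ℓ' ⟨(j : ℕ) + 1, h⟩ i' using 1
        simp [h0, hj]
      · simp only [dif_neg h]
        rw [last_iff hP] at h
        convert hasDerivAt_coord r ℓ 0 i t₀ (σ ℓ') 0 i' using 1
        simp [h, Equiv.apply_eq_iff_eq_symm_apply]
    have := (ha.sub hb).pow 2
    rw [ht₀] at this
    norm_num [updR_self] at this
    exact this
  have hsum : HasDerivAt (fun t => ∑ ℓ' : Fin N, ∑ j : Fin P, ∑ i' : Fin d,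
      (updR r ℓ 0 i t ℓ' j i' + (w ℓ' j i' : ℝ) * L -
        (if h : (j : ℕ) + 1 < P then updR r ℓ 0 i t ℓ' ⟨(j : ℕ) + 1, h⟩ i'
          else updR r ℓ 0 i t (σ ℓ') 0 i')) ^ 2)
      (∑ ℓ' : Fin N, ∑ j : Fin P, ∑ i' : Fin d,
        2 * ((r ℓ' j i' + (w ℓ' j i' : ℝ) * L -
          (if h : (j : ℕ) + 1 < P then r ℓ' ⟨(j : ℕ) + 1, h⟩ i' else r (σ ℓ') 0 i')))
          * ((if ℓ' = ℓ ∧ j = 0 ∧ i' = i then 1 else 0)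
            - (if ℓ' = σ.symm ℓ ∧ j = lastIdx P ∧ i' = i then 1 else 0))) t₀ := by
    apply HasDerivAt.fun_sum; intro ℓ' _
    apply HasDerivAt.fun_sum; intro j _
    apply HasDerivAt.fun_sum; intro i' _
    exact key ℓ' j i'
  have h2 := hsum.const_mul c
  have heq : c * (∑ ℓ' : Fin N, ∑ j : Fin P, ∑ i' : Fin d,
        2 * ((r ℓ' j i' + (w ℓ' j i' : ℝ) * L -
          (if h : (j : ℕ) + 1 < P then r ℓ' ⟨(j : ℕ) + 1, h⟩ i' else r (σ ℓ') 0 i')))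
          * ((if ℓ' = ℓ ∧ j = 0 ∧ i' = i then 1 else 0)
            - (if ℓ' = σ.symm ℓ ∧ j = lastIdx P ∧ i' = i then 1 else 0)))
      = 2 * c * (r ℓ 0 i + (w ℓ 0 i : ℝ) * L - r ℓ 1 i)
        - 2 * c * (r (σ.symm ℓ) (lastIdx P) i + (w (σ.symm ℓ) (lastIdx P) i : ℝ) * L
            - r ℓ 0 i) := by
    have h01 : (0 : ℕ) + 1 < P := by omega
    have hlastP : ¬ ((lastIdx P : ℕ) + 1 < P) := by
      unfold lastIdx; simp only; omega
    simp only [mul_sub, Finset.sum_sub_distrib, mul_ite, mul_one, mul_zero, ite_and,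
      Finset.sum_ite_irrel, Finset.sum_const_zero, Finset.sum_ite_eq',
      Finset.mem_univ, if_true]
    have hv0 : ((0 : Fin P) : ℕ) = 0 := rfl
    simp only [hv0]
    rw [dif_pos h01, dif_neg hlastP, one_eq hP h01]
    simp only [Equiv.apply_symm_apply]
    ring
  rw [heq] at h2
  unfold Eperm
  convert h2 using 2

lemma mem_WAll_apply {W : ℕ} {w' : Fin N → Fin P → Fin d → ℤ}
    (hw' : w' ∈ WAll N P d W) (a : Fin N) (b : Fin P) : w' a b ∈ windowSet d W := by
  simp only [WAll, Fintype.mem_piFinset] at hw'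
  exact hw' a b


set_option maxHeartbeats 2000000 in
/-- grouped force on the first bead of a particle in bosonic PIMD with PBC
(`P ≥ 2`). Minus the partial derivative of `V` w.r.t. `(r_ℓ^1)_i` equals the contributions
of the exterior spring entering bead `1` of particle `ℓ`, weighted by the joint
connectivity–winding probabilities, plus the contribution of the interior spring to bead
`2`, weighted by the marginal winding probability. -/
theorem stmt14 (N P d W : ℕ) [NeZero N] [NeZero P] (hP : 2 ≤ P) (hd : 0 < d)
    (β L c : ℝ) (hβ : 0 < β) (hL : 0 < L) (hc : 0 < c)
    (r : Fin N → Fin P → Fin d → ℝ) (ℓ : Fin N) (i : Fin d) :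
    HasDerivAt (fun t => Vb N P d W β c L (updR r ℓ 0 i t))
      (-((∑ ℓ' : Fin N, ∑ w ∈ windowSet d W,
            ((∑ σ ∈ Finset.univ.filter (fun σ : Equiv.Perm (Fin N) => σ ℓ' = ℓ),
                ∑ w' ∈ (WAll N P d W).filter (fun w' => w' ℓ' (lastIdx P) = w),
                  Real.exp (-(β * Eperm N P d c L r σ w'))) /
                ((Nat.factorial N : ℝ) * Zb N P d W β c L r)) *
              ((-2 * c) * (r ℓ 0 i - r ℓ' (lastIdx P) i - (w i : ℝ) * L))) +
          ∑ w ∈ windowSet d W,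
            ((∑ σ : Equiv.Perm (Fin N),
                ∑ w' ∈ (WAll N P d W).filter (fun w' => w' ℓ 0 = w),
                  Real.exp (-(β * Eperm N P d c L r σ w'))) /
                ((Nat.factorial N : ℝ) * Zb N P d W β c L r)) *
              ((-2 * c) * (r ℓ 0 i + (w i : ℝ) * L - r ℓ 1 i))))
      (r ℓ 0 i) := by
  classical
  have hfac : (0:ℝ) < (Nat.factorial N : ℝ) := by
    exact_mod_cast Nat.factorial_pos N
  have hwne : (WAll N P d W).Nonempty := by
    refine ⟨fun _ _ _ => 0, ?_⟩
    simp only [WAll, windowSet, Fintype.mem_piFinset, Finset.mem_Icc]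
    intro a b j
    constructor <;> simp
  have hZpos : 0 < Zb N P d W β c L r := by
    unfold Zb
    apply mul_pos (by positivity)
    apply Finset.sum_pos _ Finset.univ_nonempty
    intro σ _
    apply Finset.sum_pos _ hwne
    intro w _
    exact Real.exp_pos _
  have hDpos : 0 < (Nat.factorial N : ℝ) * Zb N P d W β c L r := mul_pos hfac hZpos
  -- derivative of Zb
  have hZ' : HasDerivAt (fun t => Zb N P d W β c L (updR r ℓ 0 i t))
      ((1 / (Nat.factorial N : ℝ)) *
        ∑ σ : Equiv.Perm (Fin N), ∑ w ∈ WAll N P d W,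
          Real.exp (-(β * Eperm N P d c L r σ w)) *
            (-(β * (2 * c * (r ℓ 0 i + (w ℓ 0 i : ℝ) * L - r ℓ 1 i)
              - 2 * c * (r (σ.symm ℓ) (lastIdx P) i
                + (w (σ.symm ℓ) (lastIdx P) i : ℝ) * L - r ℓ 0 i)))))
      (r ℓ 0 i) := by
    unfold Zb
    apply HasDerivAt.const_mul
    apply HasDerivAt.fun_sum
    intro σ _
    apply HasDerivAt.fun_sum
    intro w _
    have h1 := (((hasDerivAt_Eperm hP c L r ℓ i σ w).const_mul β).neg).exp
    simpa [updR_self] using h1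
  have hne : Zb N P d W β c L (updR r ℓ 0 i (r ℓ 0 i)) ≠ 0 := by
    rw [updR_self]; exact hZpos.ne'
  have hV := (hZ'.log hne).const_mul (-(1 / β))
  rw [updR_self] at hV
  have hVfun : (fun t => Vb N P d W β c L (updR r ℓ 0 i t))
      = fun t => -(1 / β) * Real.log (Zb N P d W β c L (updR r ℓ 0 i t)) := by
    funext t; rfl
  rw [hVfun]
  refine HasDerivAt.congr_deriv hV (Eq.symm ?_)
  -- abbreviations for the summands
  have hcond : ∀ (σ : Equiv.Perm (Fin N)) (ℓ' : Fin N), (σ ℓ' = ℓ) = (ℓ' = σ.symm ℓ) :=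
    fun σ ℓ' => by rw [eq_iff_iff, Equiv.apply_eq_iff_eq_symm_apply]
  have hA : (∑ ℓ' : Fin N, ∑ w ∈ windowSet d W,
        ((∑ σ ∈ Finset.univ.filter (fun σ : Equiv.Perm (Fin N) => σ ℓ' = ℓ),
            ∑ w' ∈ (WAll N P d W).filter (fun w' => w' ℓ' (lastIdx P) = w),
              Real.exp (-(β * Eperm N P d c L r σ w'))) /
            ((Nat.factorial N : ℝ) * Zb N P d W β c L r)) *
          ((-2 * c) * (r ℓ 0 i - r ℓ' (lastIdx P) i - (w i : ℝ) * L)))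
      = ∑ σ : Equiv.Perm (Fin N), ∑ w' ∈ WAll N P d W,
          Real.exp (-(β * Eperm N P d c L r σ w')) /
            ((Nat.factorial N : ℝ) * Zb N P d W β c L r) *
          ((-2 * c) * (r ℓ 0 i - r (σ.symm ℓ) (lastIdx P) i
            - (w' (σ.symm ℓ) (lastIdx P) i : ℝ) * L)) := by
    simp only [Finset.sum_div, Finset.sum_mul]
    calc
      ∑ ℓ' : Fin N, ∑ w ∈ windowSet d W,
          ∑ σ ∈ Finset.univ.filter (fun σ : Equiv.Perm (Fin N) => σ ℓ' = ℓ),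
          ∑ w' ∈ (WAll N P d W).filter (fun w' => w' ℓ' (lastIdx P) = w),
            Real.exp (-(β * Eperm N P d c L r σ w')) /
              ((Nat.factorial N : ℝ) * Zb N P d W β c L r) *
            ((-2 * c) * (r ℓ 0 i - r ℓ' (lastIdx P) i - (w i : ℝ) * L))
        = ∑ ℓ' : Fin N,
            ∑ σ ∈ Finset.univ.filter (fun σ : Equiv.Perm (Fin N) => σ ℓ' = ℓ),
            ∑ w ∈ windowSet d W,
            ∑ w' ∈ (WAll N P d W).filter (fun w' => w' ℓ' (lastIdx P) = w),
              Real.exp (-(β * Eperm N P d c L r σ w')) /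
                ((Nat.factorial N : ℝ) * Zb N P d W β c L r) *
              ((-2 * c) * (r ℓ 0 i - r ℓ' (lastIdx P) i - (w i : ℝ) * L)) :=
          Finset.sum_congr rfl fun ℓ' _ => Finset.sum_comm
      _ = ∑ ℓ' : Fin N,
            ∑ σ ∈ Finset.univ.filter (fun σ : Equiv.Perm (Fin N) => σ ℓ' = ℓ),
            ∑ w' ∈ WAll N P d W,
              Real.exp (-(β * Eperm N P d c L r σ w')) /
                ((Nat.factorial N : ℝ) * Zb N P d W β c L r) *
              ((-2 * c) * (r ℓ 0 i - r ℓ' (lastIdx P) i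
                - (w' ℓ' (lastIdx P) i : ℝ) * L)) := by
          refine Finset.sum_congr rfl fun ℓ' _ => Finset.sum_congr rfl fun σ _ => ?_
          rw [← Finset.sum_fiberwise_of_maps_to
            (fun w' hw' => mem_WAll_apply hw' ℓ' (lastIdx P))
            (fun w' => Real.exp (-(β * Eperm N P d c L r σ w')) /
                ((Nat.factorial N : ℝ) * Zb N P d W β c L r) *
              ((-2 * c) * (r ℓ 0 i - r ℓ' (lastIdx P) i
                - (w' ℓ' (lastIdx P) i : ℝ) * L)))]
          refine Finset.sum_congr rfl fun w _ => Finset.sum_congr rfl fun w' hw' => ?_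
          rw [(Finset.mem_filter.mp hw').2]
      _ = ∑ σ : Equiv.Perm (Fin N), ∑ w' ∈ WAll N P d W,
            Real.exp (-(β * Eperm N P d c L r σ w')) /
              ((Nat.factorial N : ℝ) * Zb N P d W β c L r) *
            ((-2 * c) * (r ℓ 0 i - r (σ.symm ℓ) (lastIdx P) i
              - (w' (σ.symm ℓ) (lastIdx P) i : ℝ) * L)) := by
          simp only [Finset.sum_filter, hcond]
          rw [Finset.sum_comm]
          simp only [Finset.sum_ite_eq', Finset.mem_univ, if_true]
  have hB : (∑ w ∈ windowSet d W,
        ((∑ σ : Equiv.Perm (Fin N),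
            ∑ w' ∈ (WAll N P d W).filter (fun w' => w' ℓ 0 = w),
              Real.exp (-(β * Eperm N P d c L r σ w'))) /
            ((Nat.factorial N : ℝ) * Zb N P d W β c L r)) *
          ((-2 * c) * (r ℓ 0 i + (w i : ℝ) * L - r ℓ 1 i)))
      = ∑ σ : Equiv.Perm (Fin N), ∑ w' ∈ WAll N P d W,
          Real.exp (-(β * Eperm N P d c L r σ w')) /
            ((Nat.factorial N : ℝ) * Zb N P d W β c L r) *
          ((-2 * c) * (r ℓ 0 i + (w' ℓ 0 i : ℝ) * L - r ℓ 1 i)) := by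
    simp only [Finset.sum_div, Finset.sum_mul]
    rw [Finset.sum_comm]
    refine Finset.sum_congr rfl fun σ _ => ?_
    rw [← Finset.sum_fiberwise_of_maps_to (fun w' hw' => mem_WAll_apply hw' ℓ 0)
      (fun w' => Real.exp (-(β * Eperm N P d c L r σ w')) /
          ((Nat.factorial N : ℝ) * Zb N P d W β c L r) *
        ((-2 * c) * (r ℓ 0 i + (w' ℓ 0 i : ℝ) * L - r ℓ 1 i)))]
    refine Finset.sum_congr rfl fun w _ => Finset.sum_congr rfl fun w' hw' => ?_
    rw [(Finset.mem_filter.mp hw').2]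
  rw [hA, hB]
  simp only [← Finset.sum_add_distrib]
  have hstep : ∀ (σ : Equiv.Perm (Fin N)) (w' : Fin N → Fin P → Fin d → ℤ),
      (Real.exp (-(β * Eperm N P d c L r σ w')) /
          ((Nat.factorial N : ℝ) * Zb N P d W β c L r) *
        ((-2 * c) * (r ℓ 0 i - r (σ.symm ℓ) (lastIdx P) i
          - (w' (σ.symm ℓ) (lastIdx P) i : ℝ) * L)) +
       Real.exp (-(β * Eperm N P d c L r σ w')) /
          ((Nat.factorial N : ℝ) * Zb N P d W β c L r) *
        ((-2 * c) * (r ℓ 0 i + (w' ℓ 0 i : ℝ) * L - r ℓ 1 i)))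
      = -(Real.exp (-(β * Eperm N P d c L r σ w')) *
          (-(β * (2 * c * (r ℓ 0 i + (w' ℓ 0 i : ℝ) * L - r ℓ 1 i)
            - 2 * c * (r (σ.symm ℓ) (lastIdx P) i
              + (w' (σ.symm ℓ) (lastIdx P) i : ℝ) * L - r ℓ 0 i)))) *
          (-(1 / β) * (1 / (Nat.factorial N : ℝ)) / Zb N P d W β c L r)) := by
    intro σ w'
    field_simp
    ring
  calc
    -(∑ σ : Equiv.Perm (Fin N), ∑ w' ∈ WAll N P d W,
        (Real.exp (-(β * Eperm N P d c L r σ w')) /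
            ((Nat.factorial N : ℝ) * Zb N P d W β c L r) *
          ((-2 * c) * (r ℓ 0 i - r (σ.symm ℓ) (lastIdx P) i
            - (w' (σ.symm ℓ) (lastIdx P) i : ℝ) * L)) +
         Real.exp (-(β * Eperm N P d c L r σ w')) /
            ((Nat.factorial N : ℝ) * Zb N P d W β c L r) *
          ((-2 * c) * (r ℓ 0 i + (w' ℓ 0 i : ℝ) * L - r ℓ 1 i))))
      = ∑ σ : Equiv.Perm (Fin N), ∑ w' ∈ WAll N P d W,
          Real.exp (-(β * Eperm N P d c L r σ w')) *
            (-(β * (2 * c * (r ℓ 0 i + (w' ℓ 0 i : ℝ) * L - r ℓ 1 i)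
              - 2 * c * (r (σ.symm ℓ) (lastIdx P) i
                + (w' (σ.symm ℓ) (lastIdx P) i : ℝ) * L - r ℓ 0 i)))) *
            (-(1 / β) * (1 / (Nat.factorial N : ℝ)) / Zb N P d W β c L r) := by
        rw [← Finset.sum_neg_distrib]
        refine Finset.sum_congr rfl fun σ _ => ?_
        rw [← Finset.sum_neg_distrib]
        refine Finset.sum_congr rfl fun w' _ => ?_
        rw [hstep σ w']
        ring
    _ = -(1 / β) * (1 / (Nat.factorial N : ℝ) *
          (∑ σ : Equiv.Perm (Fin N), ∑ w' ∈ WAll N P d W,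
            Real.exp (-(β * Eperm N P d c L r σ w')) *
              (-(β * (2 * c * (r ℓ 0 i + (w' ℓ 0 i : ℝ) * L - r ℓ 1 i)
                - 2 * c * (r (σ.symm ℓ) (lastIdx P) i
                  + (w' (σ.symm ℓ) (lastIdx P) i : ℝ) * L - r ℓ 0 i))))) /
          Zb N P d W β c L r) := by
        simp only [← Finset.sum_mul]
        ring

end
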